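/- Let γ, α, β > 0, fix a real v, and for a finite set 𝒱 ⊆ ℝ containing some element ≤ v and some element ≥ v, define D(𝒱) = d(v_l, v_r) where v_l = max{w ∈ 𝒱 : w ≤ v}, v_r = min{w ∈ 𝒱 : w ≥ v}, and d(v_l, v_r) = γ e^{α(v_r − v_l)}(e^{β min(v − v_l, v_r − v)} − 1). Assume the ordering v − ṽ < v − v_{l₂} ≤ v − v_{l₁} ≤ v_{r₂} − v ≤ v_{r₁} − v, where v_{l₁}, v_{r₁} are the closest anchors to v in 𝒱₁ and v_{l₂}, v_{r₂} in 𝒱₂, with 𝒱₁ ⊆ 𝒱₂. Then D(𝒱₁) − D(𝒱₁ ∪ {ṽ}) ≥ D(𝒱₂) − D(𝒱₂ ∪ {ṽ}). -/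

import Mathlib

noncomputable def synthDist (γ α β v vl vr : ℝ) : ℝ :=
  γ * Real.exp (α * (vr - vl)) * (Real.exp (β * min (v - vl) (vr - v)) - 1)

noncomputable def anchorDist (γ α β v : ℝ) (V : Finset ℝ) : ℝ :=
  synthDist γ α β v (((V.filter (fun w => w ≤ v)).max).unbotD 0)
    (((V.filter (fun w => v ≤ w)).min).untopD 0)

open Real in
lemma gmono (α β v : ℝ) (hα : 0 < α) (hβ : 0 < β) {a b : ℝ} (hab : a ≤ b) (hb : b ≤ v) :
    Real.exp (-α*b) * (Real.exp (β*(v-b))-1) ≤ Real.exp (-α*a) * (Real.exp (β*(v-a))-1) := by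
  apply mul_le_mul
  · exact exp_le_exp.2 (by nlinarith)
  · exact sub_le_sub_right (exp_le_exp.2 (by nlinarith)) 1
  · have : (1:ℝ) ≤ Real.exp (β*(v-b)) := one_le_exp (by nlinarith)
    linarith
  · exact (exp_pos _).le

open Real in
lemma keyineq (γ α β v vt vl1 vl2 vr1 vr2 : ℝ)
    (hγ : 0 < γ) (hα : 0 < α) (hβ : 0 < β)
    (hvt : vt ≤ v) (h12 : vl1 ≤ vl2) (h2t : vl2 ≤ vt)
    (hv2 : v ≤ vr2) (h21 : vr2 ≤ vr1)
    (h3 : v - vl1 ≤ vr2 - v) :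
    synthDist γ α β v vl2 vr2 - synthDist γ α β v vt vr2 ≤
    synthDist γ α β v vl1 vr1 - synthDist γ α β v vt vr1 := by
  have m1 : min (v - vl1) (vr1 - v) = v - vl1 := min_eq_left (by linarith)
  have m2 : min (v - vl2) (vr2 - v) = v - vl2 := min_eq_left (by linarith)
  have mt2 : min (v - vt) (vr2 - v) = v - vt := min_eq_left (by linarith)
  have mt1 : min (v - vt) (vr1 - v) = v - vt := min_eq_left (by linarith)
  unfold synthDist
  rw [m1, m2, mt2, mt1]
  have id : ∀ l r : ℝ, γ * Real.exp (α*(r-l)) * (Real.exp (β*(v-l))-1)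
      = γ * (Real.exp (α*r) * (Real.exp (-α*l) * (Real.exp (β*(v-l))-1))) := by
    intro l r
    rw [show α*(r-l) = α*r + (-α*l) by ring, Real.exp_add]; ring
  rw [id vl1 vr1, id vl2 vr2, id vt vr1, id vt vr2]
  have hg21 := gmono α β v hα hβ h12 (show vl2 ≤ v by linarith)
  have hgt2 := gmono α β v hα hβ h2t hvt
  have hA : Real.exp (α*vr2) ≤ Real.exp (α*vr1) := exp_le_exp.2 (by nlinarith)
  have key : Real.exp (α*vr2) * ((Real.exp (-α*vl2) * (Real.exp (β*(v-vl2))-1)) - (Real.exp (-α*vt) * (Real.exp (β*(v-vt))-1)))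
      ≤ Real.exp (α*vr1) * ((Real.exp (-α*vl1) * (Real.exp (β*(v-vl1))-1)) - (Real.exp (-α*vt) * (Real.exp (β*(v-vt))-1))) := by
    apply mul_le_mul hA (by linarith) (by linarith) (exp_pos _).le
  nlinarith [mul_le_mul_of_nonneg_left key hγ.le]

lemma anchorUnion_lt (γ α β v vt vl vr : ℝ) (V : Finset ℝ)
    (hl : ((V.filter (fun w => w ≤ v)).max : WithBot ℝ) = (vl : WithBot ℝ))
    (hr : ((V.filter (fun w => v ≤ w)).min : WithTop ℝ) = (vr : WithTop ℝ))
    (hvt : vt < v) (hlv : vl ≤ vt) :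
    anchorDist γ α β v (V ∪ {vt}) = synthDist γ α β v vt vr := by
  have hU : V ∪ {vt} = insert vt V := by rw [Finset.union_comm, Finset.insert_eq]
  unfold anchorDist
  rw [hU, Finset.filter_insert, Finset.filter_insert, if_pos hvt.le,
    if_neg (not_le.2 hvt), Finset.max_insert, hl, hr]
  have : max (vt : WithBot ℝ) (vl : WithBot ℝ) = ((vt : ℝ) : WithBot ℝ) := by
    rw [← WithBot.coe_max, max_eq_left hlv]
  rw [this]
  rfl

lemma anchorUnion_eq (γ α β v vl vr : ℝ) (V : Finset ℝ)
    (hl : ((V.filter (fun w => w ≤ v)).max : WithBot ℝ) = (vl : WithBot ℝ))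
    (hr : ((V.filter (fun w => v ≤ w)).min : WithTop ℝ) = (vr : WithTop ℝ))
    (hlv : vl ≤ v) (hvr : v ≤ vr) :
    anchorDist γ α β v (V ∪ {v}) = 0 := by
  have hU : V ∪ {v} = insert v V := by rw [Finset.union_comm, Finset.insert_eq]
  unfold anchorDist
  rw [hU, Finset.filter_insert, Finset.filter_insert, if_pos le_rfl, if_pos le_rfl,
    Finset.max_insert, Finset.min_insert, hl, hr]
  have h1 : max (v : WithBot ℝ) (vl : WithBot ℝ) = ((v : ℝ) : WithBot ℝ) := by
    rw [← WithBot.coe_max, max_eq_left hlv]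
  have h2 : min (v : WithTop ℝ) (vr : WithTop ℝ) = ((v : ℝ) : WithTop ℝ) := by
    rw [← WithTop.coe_min, min_eq_left hvr]
  rw [h1, h2]
  show synthDist γ α β v v v = 0
  simp [synthDist]

lemma synth_self (γ α β v vr : ℝ) (hvr : v ≤ vr) :
    synthDist γ α β v v vr = 0 := by
  unfold synthDist
  rw [min_eq_left (by linarith), sub_self, mul_zero, Real.exp_zero]
  ring

lemma anchor_eq (γ α β v vl vr : ℝ) (V : Finset ℝ)
    (hl : ((V.filter (fun w => w ≤ v)).max : WithBot ℝ) = (vl : WithBot ℝ))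
    (hr : ((V.filter (fun w => v ≤ w)).min : WithTop ℝ) = (vr : WithTop ℝ)) :
    anchorDist γ α β v V = synthDist γ α β v vl vr := by
  unfold anchorDist
  rw [hl, hr]
  rfl

theorem diminishing_distortion_reduction_case8a
    (γ α β v vt vl1 vl2 vr1 vr2 : ℝ) (V1 V2 : Finset ℝ)
    (hγ : 0 < γ) (hα : 0 < α) (hβ : 0 < β)
    (hsub : V1 ⊆ V2)
    (hl1 : ((V1.filter (fun w => w ≤ v)).max : WithBot ℝ) = (vl1 : WithBot ℝ))
    (hr1 : ((V1.filter (fun w => v ≤ w)).min : WithTop ℝ) = (vr1 : WithTop ℝ))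
    (hl2 : ((V2.filter (fun w => w ≤ v)).max : WithBot ℝ) = (vl2 : WithBot ℝ))
    (hr2 : ((V2.filter (fun w => v ≤ w)).min : WithTop ℝ) = (vr2 : WithTop ℝ))
    (hvt : vt ≤ v)
    (h1 : v - vt < v - vl2) (h2 : v - vl2 ≤ v - vl1)
    (h3 : v - vl1 ≤ vr2 - v) (h4 : vr2 - v ≤ vr1 - v) :
    anchorDist γ α β v V2 - anchorDist γ α β v (V2 ∪ {vt}) ≤
    anchorDist γ α β v V1 - anchorDist γ α β v (V1 ∪ {vt}) := by
  have hv2 : v ≤ vr2 := (Finset.mem_filter.1 (Finset.mem_of_min hr2)).2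
  have hvl1 : vl1 ≤ v := (Finset.mem_filter.1 (Finset.mem_of_max hl1)).2
  rw [anchor_eq γ α β v vl1 vr1 V1 hl1 hr1, anchor_eq γ α β v vl2 vr2 V2 hl2 hr2]
  rcases lt_or_eq_of_le hvt with hlt | heq
  · rw [anchorUnion_lt γ α β v vt vl1 vr1 V1 hl1 hr1 hlt (by linarith),
      anchorUnion_lt γ α β v vt vl2 vr2 V2 hl2 hr2 hlt (by linarith)]
    exact keyineq γ α β v vt vl1 vl2 vr1 vr2 hγ hα hβ hvt (by linarith) (by linarith)
      hv2 (by linarith) h3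
  · subst heq
    rw [anchorUnion_eq γ α β vt vl1 vr1 V1 hl1 hr1 (by linarith) (by linarith),
      anchorUnion_eq γ α β vt vl2 vr2 V2 hl2 hr2 (by linarith) hv2]
    have := keyineq γ α β vt vt vl1 vl2 vr1 vr2 hγ hα hβ le_rfl (by linarith) (by linarith)
      hv2 (by linarith) h3
    rw [synth_self γ α β vt vr2 hv2, synth_self γ α β vt vr1 (by linarith)] at this
    linarith
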